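/- arXiv:2205.10301 — 6 statements merged into one kernel-verified Lean document; each statement's English description precedes it below -/
import Mathlib

section
/- Let A be an n×n real matrix and let m be a positive natural number. Then tr(A^(2m)) ≤ tr((A·Aᵀ)^m), where Aᵀ denotes the transpose of A. -/
open Matrix Finset
open scoped ComplexOrder

set_option maxHeartbeats 1000000

namespace TraceAux

variable {N : ℕ}






lemma conj_pow (U D : Matrix (Fin N) (Fin N) ℂ) (h1 : star U * U = 1)
    (h2 : U * star U = 1) (m : ℕ) : (U * D * star U) ^ m = U * D ^ m * star U := by
  induction m with
  | zero => simpa using h2.symm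
  | succ k ih =>
    rw [pow_succ, ih, pow_succ]
    calc U * D ^ k * star U * (U * D * star U)
        = U * D ^ k * (star U * U) * D * star U := by noncomm_ring
      _ = U * (D ^ k * D) * star U := by rw [h1]; noncomm_ring

lemma pow_spectral {H : Matrix (Fin N) (Fin N) ℂ} (hH : H.IsHermitian) (m : ℕ) :
    H ^ m = (hH.eigenvectorUnitary : Matrix (Fin N) (Fin N) ℂ) *
      (Matrix.diagonal ((↑) ∘ hH.eigenvalues : Fin N → ℂ)) ^ m *
      star (hH.eigenvectorUnitary : Matrix (Fin N) (Fin N) ℂ) := by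
  have h2 : (hH.eigenvectorUnitary : Matrix (Fin N) (Fin N) ℂ) *
      star (hH.eigenvectorUnitary : Matrix (Fin N) (Fin N) ℂ) = 1 :=
    Matrix.mem_unitaryGroup_iff.mp hH.eigenvectorUnitary.2
  exact (congrArg (· ^ m) hH.spectral_theorem).trans
    (conj_pow _ _ (mul_eq_one_comm.mp h2) h2 m)

lemma trace_pow_eq {H : Matrix (Fin N) (Fin N) ℂ} (hH : H.IsHermitian) (m : ℕ) :
    (H ^ m).trace = ∑ i, ((hH.eigenvalues i : ℂ)) ^ m := by
  have h2 : (hH.eigenvectorUnitary : Matrix (Fin N) (Fin N) ℂ) *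
      star (hH.eigenvectorUnitary : Matrix (Fin N) (Fin N) ℂ) = 1 :=
    Matrix.mem_unitaryGroup_iff.mp hH.eigenvectorUnitary.2
  rw [pow_spectral hH m, Matrix.trace_mul_cycle, mul_eq_one_comm.mp h2, one_mul,
    Matrix.diagonal_pow, Matrix.trace_diagonal]
  simp





lemma jensen_diag {H : Matrix (Fin N) (Fin N) ℂ} (hH : H.PosSemidef) (m : ℕ) :
    ∑ i, (H i i).re ^ m ≤ ((H ^ m).trace).re := by
  classical
  have trace_pow_eq : (H ^ m).trace = ∑ i, ((hH.1.eigenvalues i : ℂ)) ^ m := trace_pow_eq hH.1 m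
  set U : Matrix (Fin N) (Fin N) ℂ := (hH.1.eigenvectorUnitary : Matrix (Fin N) (Fin N) ℂ) with hU
  set lam := hH.1.eigenvalues with hlam
  have h2 : U * star U = 1 := Matrix.mem_unitaryGroup_iff.mp hH.1.eigenvectorUnitary.2
  have h1 : star U * U = 1 := mul_eq_one_comm.mp h2
  set w : Fin N → Fin N → ℝ := fun i k => Complex.normSq (U i k) with hw
  have hrow : ∀ i, ∑ k, w i k = 1 := by
    intro i
    have h := congrArg (fun X : Matrix (Fin N) (Fin N) ℂ => (X i i).re) h2
    simpa [Matrix.mul_apply, Matrix.star_apply, Matrix.one_apply, Complex.mul_conj, hw,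
      Complex.ofReal_sum] using h
  have hcol : ∀ k, ∑ i, w i k = 1 := by
    intro k
    have h := congrArg (fun X : Matrix (Fin N) (Fin N) ℂ => (X k k).re) h1
    simpa [Matrix.mul_apply, Matrix.star_apply, Matrix.one_apply, Complex.mul_conj, mul_comm, hw,
      Complex.ofReal_sum] using h
  have key : ∀ (z : ℂ) (r : ℝ), (z * (r : ℂ) * star z).re = r * Complex.normSq z := by
    intro z r
    rw [Complex.star_def, show z * (r : ℂ) * (starRingEnd ℂ) z = (r : ℂ) * (z * (starRingEnd ℂ) z) by ring,
      Complex.mul_conj, ← Complex.ofReal_mul, Complex.ofReal_re]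
  have hdiag : ∀ i, (H i i).re = ∑ k, w i k * lam k := by
    intro i
    have h := congrArg (fun X : Matrix (Fin N) (Fin N) ℂ => (X i i).re)
      (hH.1 : H.IsHermitian).spectral_theorem
    simp only [Unitary.conjStarAlgAut_apply, Matrix.mul_apply, Matrix.diagonal_apply, Matrix.star_apply,
      Function.comp_apply, mul_ite, mul_zero, Finset.sum_ite_eq', Finset.mem_univ,
      if_true] at h
    rw [h, Complex.re_sum]
    refine Finset.sum_congr rfl fun k _ => ?_
    show (U i k * ((lam k : ℝ) : ℂ) * star (U i k)).re = w i k * lam k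
    rw [key]
    exact mul_comm _ _
  calc ∑ i, (H i i).re ^ m = ∑ i, (∑ k, w i k * lam k) ^ m := by
        exact Finset.sum_congr rfl fun i _ => by rw [hdiag i]
    _ ≤ ∑ i, ∑ k, w i k * lam k ^ m :=
        Finset.sum_le_sum fun i _ => Real.pow_arith_mean_le_arith_mean_pow univ _ _
          (fun k _ => Complex.normSq_nonneg _) (hrow i)
          (fun k _ => hH.eigenvalues_nonneg k) m
    _ = ∑ k, (∑ i, w i k) * lam k ^ m := by
        rw [Finset.sum_comm]
        exact Finset.sum_congr rfl fun k _ => by rw [Finset.sum_mul]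
    _ = ∑ k, lam k ^ m := by simp [hcol]
    _ = ((H ^ m).trace).re := by
        rw [trace_pow_eq, Complex.re_sum]
        simp [← Complex.ofReal_pow]





/-- block diagonal matrix `diag(1, V)` on `Fin (N+1)`. -/
def corner (V : Matrix (Fin N) (Fin N) ℂ) : Matrix (Fin (N + 1)) (Fin (N + 1)) ℂ :=
  Matrix.of fun i j =>
    Fin.cases (Fin.cases (1 : ℂ) (fun _ => 0) j) (fun i' => Fin.cases 0 (fun j' => V i' j') j) i

@[simp] lemma corner_zero_zero (V : Matrix (Fin N) (Fin N) ℂ) : corner V 0 0 = 1 := rfl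
@[simp] lemma corner_zero_succ (V : Matrix (Fin N) (Fin N) ℂ) (j : Fin N) :
    corner V 0 j.succ = 0 := by simp [corner]
@[simp] lemma corner_succ_zero (V : Matrix (Fin N) (Fin N) ℂ) (i : Fin N) :
    corner V i.succ 0 = 0 := by simp [corner]
@[simp] lemma corner_succ_succ (V : Matrix (Fin N) (Fin N) ℂ) (i j : Fin N) :
    corner V i.succ j.succ = V i j := by simp [corner]

lemma corner_conjTranspose (V : Matrix (Fin N) (Fin N) ℂ) : (corner V)ᴴ = corner Vᴴ := by
  ext i j
  refine Fin.cases ?_ (fun i' => ?_) i <;> refine Fin.cases ?_ (fun j' => ?_) j <;>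
    simp [Matrix.conjTranspose_apply]

lemma corner_mul (V W : Matrix (Fin N) (Fin N) ℂ) :
    corner V * corner W = corner (V * W) := by
  ext i j
  rw [Matrix.mul_apply]
  rw [Fin.sum_univ_succ]
  refine Fin.cases ?_ (fun i' => ?_) i <;> refine Fin.cases ?_ (fun j' => ?_) j <;>
    simp [Matrix.mul_apply]

lemma corner_unitary {V : Matrix (Fin N) (Fin N) ℂ} (hV : V * Vᴴ = 1) :
    corner V * (corner V)ᴴ = 1 := by
  rw [corner_conjTranspose, corner_mul, hV]
  ext i j
  refine Fin.cases ?_ (fun i' => ?_) i <;> refine Fin.cases ?_ (fun j' => ?_) j <;>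
    simp [Matrix.one_apply, Fin.succ_ne_zero, (Fin.succ_ne_zero _).symm, Fin.succ_inj]

lemma conj_corner_zero_zero (V : Matrix (Fin N) (Fin N) ℂ) (P : Matrix (Fin (N+1)) (Fin (N+1)) ℂ) :
    ((corner V)ᴴ * P * corner V) 0 0 = P 0 0 := by
  have h1 : (P * corner V) 0 0 = P 0 0 := by
    rw [Matrix.mul_apply, Fin.sum_univ_succ]
    simp
  rw [Matrix.mul_assoc, Matrix.mul_apply, Fin.sum_univ_succ, h1]
  simp [Matrix.conjTranspose_apply]

lemma conj_corner_succ_succ (V : Matrix (Fin N) (Fin N) ℂ) (P : Matrix (Fin (N+1)) (Fin (N+1)) ℂ)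
    (i j : Fin N) :
    ((corner V)ᴴ * P * corner V) i.succ j.succ =
      (Vᴴ * P.submatrix Fin.succ Fin.succ * V) i j := by
  have h1 : ∀ p : Fin (N+1), (P * corner V) p j.succ =
      ∑ q : Fin N, P p q.succ * V q j := by
    intro p
    rw [Matrix.mul_apply, Fin.sum_univ_succ]
    simp
  rw [Matrix.mul_assoc, Matrix.mul_apply, Fin.sum_univ_succ]
  simp only [Matrix.conjTranspose_apply, corner_zero_succ, star_zero, zero_mul, zero_add,
    corner_succ_succ]
  calc ∑ p : Fin N, star (V p i) * (P * corner V) p.succ j.succ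
      = ∑ p : Fin N, ∑ q : Fin N, star (V p i) * (P p.succ q.succ * V q j) := by
        refine Finset.sum_congr rfl fun p _ => ?_
        rw [h1, Finset.mul_sum]
    _ = (Vᴴ * P.submatrix Fin.succ Fin.succ * V) i j := by
        rw [Matrix.mul_assoc, Matrix.mul_apply]
        refine Finset.sum_congr rfl fun p _ => ?_
        rw [Matrix.mul_apply, Finset.mul_sum]
        refine Finset.sum_congr rfl fun q _ => ?_
        simp [Matrix.conjTranspose_apply]


lemma corner_split {P : Matrix (Fin (N+1)) (Fin (N+1)) ℂ} (hP : P.PosSemidef) (m : ℕ) :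
    (P 0 0).re ^ m + ((P.submatrix Fin.succ Fin.succ ^ m).trace).re ≤ ((P ^ m).trace).re := by
  classical
  set Q := P.submatrix Fin.succ Fin.succ with hQdef
  have hQ : Q.PosSemidef := hP.submatrix Fin.succ
  set V : Matrix (Fin N) (Fin N) ℂ := (hQ.1.eigenvectorUnitary : Matrix (Fin N) (Fin N) ℂ)
    with hV
  have hVu : V * Vᴴ = 1 := by
    rw [← Matrix.star_eq_conjTranspose]
    exact Matrix.mem_unitaryGroup_iff.mp hQ.1.eigenvectorUnitary.2
  set W := corner V with hW
  have hWu : W * Wᴴ = 1 := corner_unitary hVu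
  have hWu' : Wᴴ * W = 1 := by
    rw [← Matrix.star_eq_conjTranspose] at hWu ⊢
    exact mul_eq_one_comm.mp hWu
  have hPt : (Wᴴ * P * W).PosSemidef := hP.conjTranspose_mul_mul_same W
  have hconj : ((Wᴴ * P * W) ^ m) = Wᴴ * P ^ m * W := by
    have h := conj_pow (star W) P ?_ ?_ m
    · rw [star_star] at h
      rw [← Matrix.star_eq_conjTranspose]
      exact h
    · rw [star_star, ← Matrix.star_eq_conjTranspose] at *
      exact hWu
    · rw [star_star, ← Matrix.star_eq_conjTranspose] at *
      exact hWu'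
  have htr : (((Wᴴ * P * W) ^ m).trace).re = ((P ^ m).trace).re := by
    rw [hconj, Matrix.trace_mul_cycle, hWu, one_mul]
  have hj := jensen_diag hPt m
  rw [htr] at hj
  rw [Fin.sum_univ_succ] at hj
  have h00 : (Wᴴ * P * W) 0 0 = P 0 0 := conj_corner_zero_zero V P
  have hdV : Vᴴ * Q * V = Matrix.diagonal ((↑) ∘ hQ.1.eigenvalues : Fin N → ℂ) := by
    rw [← Matrix.star_eq_conjTranspose]
    have h := (hQ.1 : Q.IsHermitian).conjStarAlgAut_star_eigenvectorUnitary
    rw [Unitary.conjStarAlgAut_star_apply] at h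
    exact h
  have hss : ∀ i : Fin N, ((Wᴴ * P * W) i.succ i.succ).re = hQ.1.eigenvalues i := by
    intro i
    rw [conj_corner_succ_succ V P i i, ← hQdef, hdV, Matrix.diagonal_apply_eq]
    simp
  have hsum : ∑ i : Fin N, ((Wᴴ * P * W) i.succ i.succ).re ^ m = ((Q ^ m).trace).re := by
    rw [trace_pow_eq hQ.1 m, Complex.re_sum]
    refine Finset.sum_congr rfl fun i _ => ?_
    rw [hss i, ← Complex.ofReal_pow, Complex.ofReal_re]
  rw [h00, hsum] at hj
  exact hj




section Col0
variable {X Y : Matrix (Fin (N+1)) (Fin (N+1)) ℂ}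

lemma mul_col0 (hX : ∀ i : Fin N, X i.succ 0 = 0) (hY : ∀ i : Fin N, Y i.succ 0 = 0) :
    ∀ i : Fin N, (X * Y) i.succ 0 = 0 := by
  intro i
  rw [Matrix.mul_apply, Fin.sum_univ_succ, hX i, zero_mul, zero_add]
  exact Finset.sum_eq_zero fun p _ => by rw [hY p, mul_zero]

lemma mul_zero_zero (hY : ∀ i : Fin N, Y i.succ 0 = 0) :
    (X * Y) 0 0 = X 0 0 * Y 0 0 := by
  rw [Matrix.mul_apply, Fin.sum_univ_succ]
  rw [Finset.sum_eq_zero fun p _ => by rw [hY p, mul_zero], add_zero]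

lemma mul_submatrix (hX : ∀ i : Fin N, X i.succ 0 = 0) :
    (X * Y).submatrix Fin.succ Fin.succ =
      X.submatrix Fin.succ Fin.succ * Y.submatrix Fin.succ Fin.succ := by
  ext i j
  rw [Matrix.submatrix_apply, Matrix.mul_apply, Fin.sum_univ_succ, hX i, zero_mul, zero_add,
    Matrix.mul_apply]
  rfl

lemma pow_zero_zero (hX : ∀ i : Fin N, X i.succ 0 = 0) (k : ℕ) :
    ((X ^ k) 0 0 = (X 0 0) ^ k ∧ (∀ i : Fin N, (X ^ k) i.succ 0 = 0)) ∧
      (X ^ k).submatrix Fin.succ Fin.succ = (X.submatrix Fin.succ Fin.succ) ^ k := by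
  induction k with
  | zero =>
    refine ⟨⟨by simp, fun i => ?_⟩, ?_⟩
    · simp [Matrix.one_apply, Fin.succ_ne_zero]
    · ext i j
      simp [Matrix.one_apply, Fin.succ_inj]
  | succ k ih =>
    obtain ⟨⟨h00, hcol⟩, hsub⟩ := ih
    refine ⟨⟨?_, ?_⟩, ?_⟩
    · rw [pow_succ, mul_zero_zero hX, h00, pow_succ]
    · exact fun i => by rw [pow_succ]; exact mul_col0 hcol hX i
    · rw [pow_succ, mul_submatrix hcol, hsub, pow_succ]

lemma trace_split (X : Matrix (Fin (N+1)) (Fin (N+1)) ℂ) :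
    X.trace = X 0 0 + (X.submatrix Fin.succ Fin.succ).trace := by
  rw [Matrix.trace, Fin.sum_univ_succ]
  rfl

end Col0

lemma main (m : ℕ) : ∀ (N : ℕ) (M : Matrix (Fin N) (Fin N) ℂ),
    ((M ^ (2 * m)).trace).re ≤ (((M * Mᴴ) ^ m).trace).re := by
  intro N
  induction N with
  | zero =>
    intro M
    have h1 : (M ^ (2 * m)).trace = 0 := by
      rw [Matrix.trace]; exact Finset.sum_of_isEmpty _
    have h2 : ((M * Mᴴ) ^ m).trace = 0 := by
      rw [Matrix.trace]; exact Finset.sum_of_isEmpty _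
    rw [h1, h2]
  | succ N ih =>
    intro M
    classical
    -- eigenvector of M
    obtain ⟨μ, hμ⟩ := Module.End.exists_eigenvalue (Matrix.toEuclideanLin M)
    obtain ⟨v, hv⟩ := hμ.exists_hasEigenvector
    set u : EuclideanSpace ℂ (Fin (N+1)) := (‖v‖⁻¹ : ℂ) • v with hu
    have hunorm : ‖u‖ = 1 := norm_smul_inv_norm hv.right
    have hueig : Matrix.toEuclideanLin M u = μ • u := by
      rw [hu, _root_.map_smul, hv.apply_eq_smul, smul_comm]
    -- orthonormal basis extension
    have hon : Orthonormal ℂ (Set.restrict {(0 : Fin (N+1))} (fun _ => u)) := by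
      constructor
      · intro i; exact hunorm
      · intro i j hij
        exact absurd (Subtype.ext ((Set.mem_singleton_iff.mp i.2).trans
          (Set.mem_singleton_iff.mp j.2).symm)) hij
    obtain ⟨b, hb⟩ := Orthonormal.exists_orthonormalBasis_extension_of_card_eq
      (by simp [finrank_euclideanSpace]) hon
    have hb0 : b 0 = u := hb 0 rfl
    set U : Matrix (Fin (N+1)) (Fin (N+1)) ℂ := Matrix.of (fun i j => b j i) with hUdef
    have hUU : Uᴴ * U = 1 := by
      ext j k
      rw [Matrix.mul_apply, Matrix.one_apply]
      have := orthonormal_iff_ite.mp b.orthonormal j k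
      rw [PiLp.inner_apply] at this
      simpa [Matrix.conjTranspose_apply, RCLike.inner_apply, hUdef, mul_comm] using this
    have hU2 : U * Uᴴ = 1 := mul_eq_one_comm.mp hUU
    -- the deflated matrix
    set T : Matrix (Fin (N+1)) (Fin (N+1)) ℂ := Uᴴ * M * U with hTdef
    have hMU : ∀ p, (M * U) p 0 = μ * u p := by
      intro p
      have h2 : (M *ᵥ (fun q => u q)) p = μ * u p := congrArg (fun x : EuclideanSpace ℂ (Fin (N+1)) => x p) hueig
      rw [Matrix.mul_apply]
      calc ∑ q, M p q * U q 0 = ∑ q, M p q * u q :=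
            Finset.sum_congr rfl fun q _ => by rw [hUdef]; simp [hb0]
        _ = μ * u p := h2
    have hTcol0 : ∀ i, T i 0 = μ * (if i = (0 : Fin (N+1)) then 1 else 0) := by
      intro i
      rw [hTdef, Matrix.mul_assoc, Matrix.mul_apply]
      have : ∀ p, Uᴴ i p * (M * U) p 0 = μ * (star (b i p) * u p) := by
        intro p
        rw [hMU p, Matrix.conjTranspose_apply, hUdef]
        show star (b i p) * (μ * u p) = μ * (star (b i p) * u p)
        ring
      rw [Finset.sum_congr rfl fun p _ => this p, ← Finset.mul_sum]
      congr 1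
      have := orthonormal_iff_ite.mp b.orthonormal i 0
      rw [PiLp.inner_apply] at this
      rw [← hb0]
      simpa [RCLike.inner_apply, Complex.star_def, mul_comm] using this
    have hT00 : T 0 0 = μ := by rw [hTcol0 0]; simp
    have hTcol : ∀ i : Fin N, T i.succ 0 = 0 := by
      intro i; rw [hTcol0 i.succ]; simp [Fin.succ_ne_zero]
    have hM : M = U * T * Uᴴ := by
      rw [hTdef]
      calc M = (U * Uᴴ) * M * (U * Uᴴ) := by rw [hU2, one_mul, mul_one]
        _ = U * (Uᴴ * M * U) * Uᴴ := by noncomm_ring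
    have hstar1 : star U * U = 1 := by rw [Matrix.star_eq_conjTranspose]; exact hUU
    have hstar2 : U * star U = 1 := by rw [Matrix.star_eq_conjTranspose]; exact hU2
    have htrM : (M ^ (2 * m)).trace = (T ^ (2 * m)).trace := by
      conv_lhs => rw [hM]
      rw [← Matrix.star_eq_conjTranspose, conj_pow U T hstar1 hstar2,
        Matrix.trace_mul_cycle, hstar1, one_mul]
    set P : Matrix (Fin (N+1)) (Fin (N+1)) ℂ := T * Tᴴ with hPdef
    have hP : P.PosSemidef := Matrix.posSemidef_self_mul_conjTranspose T
    have htrP : ((M * Mᴴ) ^ m).trace = (P ^ m).trace := by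
      have hMMH : M * Mᴴ = U * P * Uᴴ := by
        rw [hM, hPdef]
        simp only [Matrix.conjTranspose_mul, Matrix.conjTranspose_conjTranspose]
        calc U * T * Uᴴ * (U * (Tᴴ * Uᴴ)) = U * T * (Uᴴ * U) * (Tᴴ * Uᴴ) := by noncomm_ring
          _ = U * (T * Tᴴ) * Uᴴ := by rw [hUU]; noncomm_ring
      rw [hMMH, ← Matrix.star_eq_conjTranspose, conj_pow U P hstar1 hstar2,
        Matrix.trace_mul_cycle, hstar1, one_mul]
    -- structure of T and P
    set E : Matrix (Fin N) (Fin N) ℂ := T.submatrix Fin.succ Fin.succ with hEdef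
    obtain ⟨⟨hT00pow, _⟩, hTsub⟩ := pow_zero_zero hTcol (2 * m)
    have htrT : (T ^ (2 * m)).trace = μ ^ (2 * m) + (E ^ (2 * m)).trace := by
      rw [trace_split, hT00pow, hT00, hTsub, hEdef]
    have hP00 : Complex.normSq μ ≤ (P 0 0).re := by
      have hent : (P 0 0).re = ∑ q, Complex.normSq (T 0 q) := by
        rw [hPdef, Matrix.mul_apply]
        rw [show ∀ z : ℂ, z.re = z.re from fun _ => rfl, Complex.re_sum]
        refine Finset.sum_congr rfl fun q _ => ?_
        rw [Matrix.conjTranspose_apply, Complex.star_def, Complex.mul_conj]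
        exact Complex.ofReal_re _
      rw [hent]
      have := Finset.single_le_sum (f := fun q => Complex.normSq (T 0 q))
        (fun q _ => Complex.normSq_nonneg _) (Finset.mem_univ 0)
      simpa [hT00] using this
    have hPsub : P.submatrix Fin.succ Fin.succ = E * Eᴴ := by
      ext i j
      rw [Matrix.submatrix_apply, hPdef, Matrix.mul_apply, Fin.sum_univ_succ]
      rw [Matrix.conjTranspose_apply, hTcol j, star_zero, mul_zero, zero_add, Matrix.mul_apply]
      rfl
    -- eigenvalue bound
    have heig : (μ ^ (2 * m)).re ≤ (P 0 0).re ^ m := by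
      calc (μ ^ (2 * m)).re ≤ ‖μ ^ (2 * m)‖ := Complex.re_le_norm _
        _ = (‖μ‖ ^ 2) ^ m := by rw [norm_pow, pow_mul]
        _ = (Complex.normSq μ) ^ m := by rw [Complex.sq_norm]
        _ ≤ (P 0 0).re ^ m := pow_le_pow_left₀ (Complex.normSq_nonneg _) hP00 m
    -- assemble
    calc ((M ^ (2 * m)).trace).re = (μ ^ (2 * m)).re + ((E ^ (2 * m)).trace).re := by
          rw [htrM, htrT, Complex.add_re]
      _ ≤ (P 0 0).re ^ m + (((E * Eᴴ) ^ m).trace).re := add_le_add heig (ih E)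
      _ = (P 0 0).re ^ m + ((P.submatrix Fin.succ Fin.succ ^ m).trace).re := by rw [hPsub]
      _ ≤ ((P ^ m).trace).re := corner_split hP m
      _ = (((M * Mᴴ) ^ m).trace).re := by rw [htrP]


lemma trace_map {n : ℕ} (B : Matrix (Fin n) (Fin n) ℝ) :
    (B.map ⇑Complex.ofRealHom).trace = ((B.trace : ℝ) : ℂ) := by
  simp [Matrix.trace, Matrix.map_apply]

end TraceAux

/-- For any real square matrix `A` and positive natural `m`,
`tr(A^(2m)) ≤ tr((A * Aᵀ)^m)`. -/
theorem stmt_0 (n : ℕ) (A : Matrix (Fin n) (Fin n) ℝ) (m : ℕ) (hm : 0 < m) :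
    Matrix.trace (A ^ (2 * m)) ≤ Matrix.trace ((A * Aᵀ) ^ m) := by
  have key := TraceAux.main m n (A.map ⇑Complex.ofRealHom)
  have hct : (A.map ⇑Complex.ofRealHom)ᴴ = Aᵀ.map ⇑Complex.ofRealHom := by
    ext i j
    simp [Matrix.conjTranspose_apply, Matrix.map_apply, Complex.star_def, Complex.conj_ofReal]
  have h1 : (A.map ⇑Complex.ofRealHom) ^ (2 * m) = (A ^ (2 * m)).map ⇑Complex.ofRealHom := by
    rw [← RingHom.mapMatrix_apply, ← map_pow, RingHom.mapMatrix_apply]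
  have h2 : ((A.map ⇑Complex.ofRealHom) * (A.map ⇑Complex.ofRealHom)ᴴ) ^ m
      = ((A * Aᵀ) ^ m).map ⇑Complex.ofRealHom := by
    rw [hct, ← RingHom.mapMatrix_apply (M := A), ← RingHom.mapMatrix_apply (M := Aᵀ),
      ← _root_.map_mul, ← _root_.map_pow, RingHom.mapMatrix_apply]
  rw [h1, h2, TraceAux.trace_map, TraceAux.trace_map, Complex.ofReal_re, Complex.ofReal_re] at key
  exact key
end

section
/- Let X and Y be symmetric n×n real matrices and let k be a positive natural number. Then tr((XY)^(2^k)) ≤ tr(X^(2^k)·Y^(2^k)). -/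
open Matrix Finset

namespace Stmt1Aux

variable {n : ℕ}

lemma symm_apply {D : Matrix (Fin n) (Fin n) ℝ} (hD : Dᵀ = D) (i j : Fin n) :
    D j i = D i j :=
  congrFun (congrFun hD i) j

/-- Cauchy–Schwarz base case: `tr(M²) ≤ tr(M Mᵀ)`. -/
lemma trace_sq_le (M : Matrix (Fin n) (Fin n) ℝ) :
    Matrix.trace (M * M) ≤ Matrix.trace (M * Mᵀ) := by
  have h1 : Matrix.trace (M * M) = ∑ i, ∑ j, M i j * M j i := by
    simp [Matrix.trace, Matrix.mul_apply, Matrix.diag]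
  have h2 : Matrix.trace (M * Mᵀ) = ∑ i, ∑ j, M i j * M i j := by
    simp [Matrix.trace, Matrix.mul_apply, Matrix.diag]
  rw [h1, h2]
  have hs : ∑ i, ∑ j, M j i * M j i = ∑ i, ∑ j, M i j * M i j := Finset.sum_comm
  have key : ∑ i, ∑ j, M i j * M j i
      ≤ ∑ i, ∑ j, ((M i j * M i j) / 2 + (M j i * M j i) / 2) :=
    Finset.sum_le_sum fun i _ => Finset.sum_le_sum fun j _ => by
      nlinarith [sq_nonneg (M i j - M j i)]
  refine key.trans_eq ?_
  simp only [Finset.sum_add_distrib, ← Finset.sum_div]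
  rw [hs]; ring

/-- Cauchy–Schwarz: for symmetric `C D` with `tr(D²) = tr(C²)`, `tr(CD) ≤ tr(C²)`. -/
lemma trace_mul_le_of_symm (C D : Matrix (Fin n) (Fin n) ℝ)
    (hC : Cᵀ = C) (hD : Dᵀ = D) (h : Matrix.trace (D * D) = Matrix.trace (C * C)) :
    Matrix.trace (C * D) ≤ Matrix.trace (C * C) := by
  have h1 : Matrix.trace (C * D) = ∑ p : Fin n × Fin n, C p.1 p.2 * D p.1 p.2 := by
    rw [Fintype.sum_prod_type]
    simp only [Matrix.trace, Matrix.mul_apply, Matrix.diag]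
    exact Finset.sum_congr rfl fun i _ => Finset.sum_congr rfl fun j _ => by
      rw [symm_apply hD]
  have h2 : Matrix.trace (C * C) = ∑ p : Fin n × Fin n, (C p.1 p.2) ^ 2 := by
    rw [Fintype.sum_prod_type]
    simp only [Matrix.trace, Matrix.mul_apply, Matrix.diag]
    exact Finset.sum_congr rfl fun i _ => Finset.sum_congr rfl fun j _ => by
      rw [symm_apply hC]; ring
  have h3 : Matrix.trace (D * D) = ∑ p : Fin n × Fin n, (D p.1 p.2) ^ 2 := by
    rw [Fintype.sum_prod_type]
    simp only [Matrix.trace, Matrix.mul_apply, Matrix.diag]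
    exact Finset.sum_congr rfl fun i _ => Finset.sum_congr rfl fun j _ => by
      rw [symm_apply hD]; ring
  have cs := Finset.sum_mul_sq_le_sq_mul_sq Finset.univ
    (fun p : Fin n × Fin n => C p.1 p.2) (fun p : Fin n × Fin n => D p.1 p.2)
  have hCnn : (0:ℝ) ≤ ∑ p : Fin n × Fin n, (C p.1 p.2) ^ 2 :=
    Finset.sum_nonneg fun p _ => sq_nonneg _
  rw [h1, h2]
  rw [h2, h3] at h
  nlinarith [cs, hCnn]

lemma mul_pow_mul (A B : Matrix (Fin n) (Fin n) ℝ) (r : ℕ) :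
    (A * B) ^ (r + 1) = A * (B * A) ^ r * B := by
  induction r with
  | zero => simp
  | succ r ih =>
      rw [pow_succ', ih, pow_succ']
      noncomm_ring

lemma trace_pow_mul_comm (A B : Matrix (Fin n) (Fin n) ℝ) (r : ℕ) :
    Matrix.trace ((A * B) ^ r) = Matrix.trace ((B * A) ^ r) := by
  cases r with
  | zero => rfl
  | succ r =>
      rw [mul_pow_mul, Matrix.trace_mul_comm, ← Matrix.mul_assoc, ← pow_succ']

/-- Main simultaneous induction. -/
lemma main : ∀ s : ℕ,
    (∀ A B : Matrix (Fin n) (Fin n) ℝ, Aᵀ = A → Bᵀ = B →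
      Matrix.trace ((A * B) ^ (2 ^ s)) ≤ Matrix.trace (A ^ (2 ^ s) * B ^ (2 ^ s))) ∧
    (∀ M : Matrix (Fin n) (Fin n) ℝ,
      Matrix.trace (M ^ (2 ^ (s + 1))) ≤ Matrix.trace ((M * Mᵀ) ^ (2 ^ s))) := by
  intro s
  induction s with
  | zero =>
      constructor
      · intro A B hA hB
        simp
      · intro M
        have e : M ^ (2 ^ (0 + 1)) = M * M := by norm_num [pow_two]
        rw [e, pow_zero, pow_one]
        exact trace_sq_le M
  | succ s ih =>
      obtain ⟨P, Q⟩ := ih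
      constructor
      · intro A B hA hB
        have step1 := Q (A * B)
        have htr : (A * B)ᵀ = B * A := by rw [Matrix.transpose_mul, hA, hB]
        rw [htr] at step1
        have e1 : Matrix.trace ((A * B * (B * A)) ^ (2 ^ s))
            = Matrix.trace ((A * A * (B * B)) ^ (2 ^ s)) := by
          have a1 : A * B * (B * A) = A * (B * B * A) := by noncomm_ring
          have a2 : B * B * A * A = B * B * (A * A) := by noncomm_ring
          rw [a1, trace_pow_mul_comm, a2, trace_pow_mul_comm]
        have step2 := P (A * A) (B * B)
          (by rw [Matrix.transpose_mul, hA]) (by rw [Matrix.transpose_mul, hB])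
        have eA : (A * A) ^ (2 ^ s) = A ^ (2 ^ (s + 1)) := by
          rw [← pow_two, ← pow_mul, ← pow_succ']
        have eB : (B * B) ^ (2 ^ s) = B ^ (2 ^ (s + 1)) := by
          rw [← pow_two, ← pow_mul, ← pow_succ']
        rw [eA, eB] at step2
        exact step1.trans (e1.le.trans step2)
      · intro M
        have e0 : M ^ (2 ^ (s + 1 + 1)) = (M * M) ^ (2 ^ (s + 1)) := by
          rw [← pow_two, ← pow_mul, ← pow_succ']
        have step1 := Q (M * M)
        have htr : (M * M)ᵀ = Mᵀ * Mᵀ := by rw [Matrix.transpose_mul]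
        rw [htr] at step1
        have e1 : Matrix.trace ((M * M * (Mᵀ * Mᵀ)) ^ (2 ^ s))
            = Matrix.trace ((M * Mᵀ * (Mᵀ * M)) ^ (2 ^ s)) := by
          have a1 : M * M * (Mᵀ * Mᵀ) = M * (M * Mᵀ * Mᵀ) := by noncomm_ring
          have a2 : M * Mᵀ * Mᵀ * M = M * Mᵀ * (Mᵀ * M) := by noncomm_ring
          rw [a1, trace_pow_mul_comm, a2]
        have hS : ((M * Mᵀ) ^ (2 ^ s))ᵀ = (M * Mᵀ) ^ (2 ^ s) := by
          rw [Matrix.transpose_pow, Matrix.transpose_mul, Matrix.transpose_transpose]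
        have hT : ((Mᵀ * M) ^ (2 ^ s))ᵀ = (Mᵀ * M) ^ (2 ^ s) := by
          rw [Matrix.transpose_pow, Matrix.transpose_mul, Matrix.transpose_transpose]
        have step2 := P (M * Mᵀ) (Mᵀ * M)
          (by rw [Matrix.transpose_mul, Matrix.transpose_transpose])
          (by rw [Matrix.transpose_mul, Matrix.transpose_transpose])
        have hr : 2 ^ s + 2 ^ s = 2 ^ (s + 1) := by rw [pow_succ']; ring
        have hDD : (Mᵀ * M) ^ (2 ^ s) * (Mᵀ * M) ^ (2 ^ s) = (Mᵀ * M) ^ (2 ^ (s + 1)) := by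
          rw [← pow_add, hr]
        have hCC : (M * Mᵀ) ^ (2 ^ s) * (M * Mᵀ) ^ (2 ^ s) = (M * Mᵀ) ^ (2 ^ (s + 1)) := by
          rw [← pow_add, hr]
        have step3 := trace_mul_le_of_symm ((M * Mᵀ) ^ (2 ^ s)) ((Mᵀ * M) ^ (2 ^ s)) hS hT
          (by rw [hDD, hCC, trace_pow_mul_comm])
        rw [hCC] at step3
        rw [e0]
        exact step1.trans (e1.le.trans (step2.trans step3))

end Stmt1Aux

/-- For symmetric real matrices `X, Y` and positive `k`,
`tr((XY)^(2^k)) ≤ tr(X^(2^k) * Y^(2^k))`. -/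
theorem stmt_1 (n : ℕ) (X Y : Matrix (Fin n) (Fin n) ℝ)
    (hX : X.IsSymm) (hY : Y.IsSymm) (k : ℕ) (hk : 0 < k) :
    Matrix.trace ((X * Y) ^ (2 ^ k)) ≤ Matrix.trace (X ^ (2 ^ k) * Y ^ (2 ^ k)) := by
  exact (Stmt1Aux.main k).1 X Y hX hY
end

section
/- (Symmetric Rearrangement) Let X and Y be symmetric n×n real matrices and let k be a positive natural number. Then tr((X·Y·X)^(2^k)) ≤ tr(X^(2^k)·Y^(2^k)·X^(2^k)). -/
open Matrix

private lemma tr_transpose_mul_self_nonneg {n : ℕ} (A : Matrix (Fin n) (Fin n) ℝ) :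
    0 ≤ Matrix.trace (Aᵀ * A) := by
  have h : Matrix.trace (Aᵀ * A) = ∑ j, ∑ i, (A i j) ^ 2 := by
    simp [Matrix.trace, Matrix.diag, Matrix.mul_apply, Matrix.transpose_apply, sq]
  rw [h]
  positivity

private lemma tr_sq_le_transpose {n : ℕ} (A : Matrix (Fin n) (Fin n) ℝ) :
    Matrix.trace (A * A) ≤ Matrix.trace (Aᵀ * A) := by
  have h := tr_transpose_mul_self_nonneg (A - Aᵀ)
  have e : (A - Aᵀ)ᵀ * (A - Aᵀ) = Aᵀ * A - Aᵀ * Aᵀ - A * A + A * Aᵀ := by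
    rw [Matrix.transpose_sub, Matrix.transpose_transpose]
    noncomm_ring
  rw [e] at h
  have h1 : Matrix.trace (A * Aᵀ) = Matrix.trace (Aᵀ * A) := Matrix.trace_mul_comm _ _
  have h2 : Matrix.trace (Aᵀ * Aᵀ) = Matrix.trace (A * A) := by
    rw [← Matrix.transpose_mul, Matrix.trace_transpose]
  rw [Matrix.trace_add, Matrix.trace_sub, Matrix.trace_sub, h1, h2] at h
  linarith

/-- Cauchy–Schwarz for the trace pairing. -/
private lemma tr_cauchy_schwarz {n : ℕ} (A B : Matrix (Fin n) (Fin n) ℝ) :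
    (Matrix.trace (Aᵀ * B)) ^ 2 ≤ Matrix.trace (Aᵀ * A) * Matrix.trace (Bᵀ * B) := by
  have hT : ∀ C D : Matrix (Fin n) (Fin n) ℝ,
      Matrix.trace (Cᵀ * D) = ∑ p ∈ Finset.univ ×ˢ Finset.univ,
        C p.2 p.1 * D p.2 p.1 := by
    intro C D
    rw [Finset.sum_product]
    simp [Matrix.trace, Matrix.diag, Matrix.mul_apply, Matrix.transpose_apply]
  rw [hT A B, hT A A, hT B B]
  have := Finset.sum_mul_sq_le_sq_mul_sq (Finset.univ ×ˢ Finset.univ)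
    (fun p : Fin n × Fin n => A p.2 p.1) (fun p : Fin n × Fin n => B p.2 p.1)
  simpa [sq] using this

private lemma pow_mul_swap {n : ℕ} (U V : Matrix (Fin n) (Fin n) ℝ) (p : ℕ) :
    (U * V) ^ p * U = U * (V * U) ^ p := by
  induction p with
  | zero => simp
  | succ q ih =>
      calc (U * V) ^ (q+1) * U = (U * V) ^ q * (U * V * U) := by rw [pow_succ, mul_assoc]
        _ = (U * V) ^ q * (U * (V * U)) := by rw [mul_assoc U V U]
        _ = ((U * V) ^ q * U) * (V * U) := by rw [mul_assoc]
        _ = U * (V * U) ^ q * (V * U) := by rw [ih]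
        _ = U * (V * U) ^ (q+1) := by rw [mul_assoc, ← pow_succ]

/-- cyclicity of the trace of a power of a product -/
private lemma tr_pow_cyc {n : ℕ} (U V : Matrix (Fin n) (Fin n) ℝ) (m : ℕ) :
    Matrix.trace ((U * V) ^ m) = Matrix.trace ((V * U) ^ m) := by
  cases m with
  | zero => simp
  | succ l =>
      rw [pow_succ, ← mul_assoc ((U*V)^l) U V, pow_mul_swap U V l,
        mul_assoc, Matrix.trace_mul_comm, mul_assoc, ← pow_succ]

/-- The two key statements, proved by simultaneous induction on `j`:
`tr(N^(2^j·2)) ≤ tr((NᵀN)^(2^j))` for every `N`, and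
`tr((AB)^(2^j)) ≤ tr(A^(2^j) B^(2^j))` for symmetric `A`, `B`. -/
private lemma key {n : ℕ} : ∀ j : ℕ,
    (∀ N : Matrix (Fin n) (Fin n) ℝ,
      Matrix.trace (N ^ (2 ^ j * 2)) ≤ Matrix.trace ((Nᵀ * N) ^ (2 ^ j))) ∧
    (∀ A B : Matrix (Fin n) (Fin n) ℝ, Aᵀ = A → Bᵀ = B →
      Matrix.trace ((A * B) ^ (2 ^ j)) ≤ Matrix.trace (A ^ (2 ^ j) * B ^ (2 ^ j))) := by
  intro j
  induction j with
  | zero =>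
      constructor
      · intro N
        have h : N ^ (2 ^ 0 * 2) = N * N := by norm_num [sq]
        rw [h, pow_zero, pow_one]
        exact tr_sq_le_transpose N
      · intro A B hA hB
        simp
  | succ j ih =>
      obtain ⟨ihL, ihM⟩ := ih
      have hMain : ∀ A B : Matrix (Fin n) (Fin n) ℝ, Aᵀ = A → Bᵀ = B →
          Matrix.trace ((A * B) ^ (2 ^ (j+1))) ≤
            Matrix.trace (A ^ (2 ^ (j+1)) * B ^ (2 ^ (j+1))) := by
        intro A B hA hB
        have e1 : (2 : ℕ) ^ (j + 1) = 2 ^ j * 2 := by rw [pow_succ]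
        rw [e1]
        calc Matrix.trace ((A * B) ^ (2 ^ j * 2))
            ≤ Matrix.trace (((A * B)ᵀ * (A * B)) ^ (2 ^ j)) := ihL (A * B)
          _ = Matrix.trace ((B * (A * (A * B))) ^ (2 ^ j)) := by
              rw [Matrix.transpose_mul, hA, hB, mul_assoc]
          _ = Matrix.trace (((A * A) * (B * B)) ^ (2 ^ j)) := by
              rw [tr_pow_cyc]
              congr 2
              noncomm_ring
          _ ≤ Matrix.trace ((A * A) ^ (2 ^ j) * (B * B) ^ (2 ^ j)) := by
              refine ihM (A * A) (B * B) ?_ ?_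
              · rw [Matrix.transpose_mul, hA]
              · rw [Matrix.transpose_mul, hB]
          _ = Matrix.trace (A ^ (2 ^ j * 2) * B ^ (2 ^ j * 2)) := by
              rw [show (A * A) = A ^ 2 by rw [sq], show (B * B) = B ^ 2 by rw [sq],
                ← pow_mul, ← pow_mul, mul_comm 2 (2 ^ j)]
      refine ⟨?_, hMain⟩
      intro N
      set S : Matrix (Fin n) (Fin n) ℝ := Nᵀ * N with hS
      set R : Matrix (Fin n) (Fin n) ℝ := N * Nᵀ with hR
      have hSsymm : Sᵀ = S := by rw [hS, Matrix.transpose_mul, Matrix.transpose_transpose]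
      have hRsymm : Rᵀ = R := by rw [hR, Matrix.transpose_mul, Matrix.transpose_transpose]
      have e1 : (2 : ℕ) ^ (j + 1) = 2 ^ j * 2 := by rw [pow_succ]
      have step1 : Matrix.trace (N ^ (2 ^ (j+1) * 2)) ≤
          Matrix.trace (((N * N)ᵀ * (N * N)) ^ (2 ^ j)) := by
        have h : N ^ (2 ^ (j+1) * 2) = (N * N) ^ (2 ^ j * 2) := by
          rw [show (N * N) = N ^ 2 by rw [sq], ← pow_mul]
          congr 1
          rw [e1]; ring
        rw [h]
        exact ihL (N * N)
      have step2 : Matrix.trace (((N * N)ᵀ * (N * N)) ^ (2 ^ j)) =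
          Matrix.trace ((S * R) ^ (2 ^ j)) := by
        rw [Matrix.transpose_mul,
          show Nᵀ * Nᵀ * (N * N) = Nᵀ * (Nᵀ * N * N) by noncomm_ring,
          tr_pow_cyc]
        congr 2
        rw [hS, hR]
        noncomm_ring
      have step3 : Matrix.trace ((S * R) ^ (2 ^ j)) ≤
          Matrix.trace (S ^ (2 ^ j) * R ^ (2 ^ j)) := ihM S R hSsymm hRsymm
      -- Cauchy–Schwarz finish: tr(S^m R^m) ≤ tr(S^(2m))
      have hSt : (S ^ (2 ^ j))ᵀ = S ^ (2 ^ j) := by rw [Matrix.transpose_pow, hSsymm]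
      have hRt : (R ^ (2 ^ j))ᵀ = R ^ (2 ^ j) := by rw [Matrix.transpose_pow, hRsymm]
      have hcs := tr_cauchy_schwarz (S ^ (2 ^ j)) (R ^ (2 ^ j))
      rw [hSt, hRt] at hcs
      have hSR : Matrix.trace (R ^ (2 ^ j) * R ^ (2 ^ j)) =
          Matrix.trace (S ^ (2 ^ j) * S ^ (2 ^ j)) := by
        rw [← pow_add, ← pow_add, hS, hR]
        exact tr_pow_cyc N Nᵀ _
      rw [hSR] at hcs
      have hpos : 0 ≤ Matrix.trace (S ^ (2 ^ j) * S ^ (2 ^ j)) := by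
        have := tr_transpose_mul_self_nonneg (S ^ (2 ^ j))
        rwa [hSt] at this
      have step4 : Matrix.trace (S ^ (2 ^ j) * R ^ (2 ^ j)) ≤
          Matrix.trace (S ^ (2 ^ j) * S ^ (2 ^ j)) := by nlinarith [hcs, hpos]
      have efin : S ^ (2 ^ j) * S ^ (2 ^ j) = S ^ (2 ^ (j+1)) := by
        rw [← pow_add, e1]; ring_nf
      calc Matrix.trace (N ^ (2 ^ (j+1) * 2))
          ≤ Matrix.trace (((N * N)ᵀ * (N * N)) ^ (2 ^ j)) := step1
        _ = Matrix.trace ((S * R) ^ (2 ^ j)) := step2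
        _ ≤ Matrix.trace (S ^ (2 ^ j) * R ^ (2 ^ j)) := step3
        _ ≤ Matrix.trace (S ^ (2 ^ j) * S ^ (2 ^ j)) := step4
        _ = Matrix.trace ((Nᵀ * N) ^ (2 ^ (j+1))) := by rw [efin, hS]

/-- Symmetric rearrangement: for symmetric real matrices `X, Y` and positive `k`,
`tr((XYX)^(2^k)) ≤ tr(X^(2^k) * Y^(2^k) * X^(2^k))`. -/
theorem stmt_2 (n : ℕ) (X Y : Matrix (Fin n) (Fin n) ℝ)
    (hX : X.IsSymm) (hY : Y.IsSymm) (k : ℕ) (hk : 0 < k) :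
    Matrix.trace ((X * Y * X) ^ (2 ^ k)) ≤
      Matrix.trace (X ^ (2 ^ k) * Y ^ (2 ^ k) * X ^ (2 ^ k)) := by
  have hX' : Xᵀ = X := hX
  have hY' : Yᵀ = Y := hY
  have h1 : Matrix.trace ((X * Y * X) ^ (2 ^ k)) =
      Matrix.trace (((X * X) * Y) ^ (2 ^ k)) := by
    rw [tr_pow_cyc (X * Y) X]
    congr 2
    noncomm_ring
  have h2 : ((X * X) : Matrix (Fin n) (Fin n) ℝ)ᵀ = X * X := by
    rw [Matrix.transpose_mul, hX']
  have h3 := ((key (n := n)) k).2 (X * X) Y h2 hY'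
  have h4 : Matrix.trace ((X * X) ^ (2 ^ k) * Y ^ (2 ^ k)) =
      Matrix.trace (X ^ (2 ^ k) * Y ^ (2 ^ k) * X ^ (2 ^ k)) := by
    rw [show (X * X) = X ^ 2 by rw [sq], ← pow_mul]
    rw [Matrix.trace_mul_comm (X ^ (2 ^ k) * Y ^ (2 ^ k)) (X ^ (2 ^ k))]
    rw [← mul_assoc, ← pow_add]
    congr 2
    ring
  rw [h1, ← h4]
  exact h3
end

section
/- (Estimating Expansion) Let m ≥ 1, let F be a symmetric doubly stochastic m×m real matrix, let A ⊆ [m] be nonempty with k = |A|, and let Δ_A = I_A − (1/k)·𝟙_A·𝟙_Aᵀ. Assume that the largest singular value of Δ_A·F·Δ_A is at most 1/100. Then for every nonempty subset S ⊆ A with |S| ≤ (6/7)·|A|, the weighted cut satisfies Σ_{u∈S, v∉S} F(u,v) ≥ |S|/100. In other words, A is a strong near (6/7, 1/100)-edge-expander in the weighted graph whose adjacency matrix is F. -/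
open Matrix

/-- The `m × m` matrix `Δ_A = I_A − (1/|A|)·𝟙_A 𝟙_Aᵀ` for a subset `A ⊆ [m]`. -/
noncomputable def DeltaA (m : ℕ) (A : Finset (Fin m)) : Matrix (Fin m) (Fin m) ℝ :=
  Matrix.diagonal (fun i => if i ∈ A then (1 : ℝ) else 0)
    - ((A.card : ℝ)⁻¹) • Matrix.vecMulVec (fun i => if i ∈ A then (1 : ℝ) else 0)
        (fun i => if i ∈ A then (1 : ℝ) else 0)

set_option maxHeartbeats 1000000 in
/-- Estimating expansion: if `F` is symmetric doubly stochastic and the largest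
singular value (operator 2-norm) of `Δ_A·F·Δ_A` is at most `1/100`, then every
nonempty `S ⊆ A` with `|S| ≤ (6/7)|A|` has weighted cut `Σ_{u∈S, v∉S} F(u,v) ≥ |S|/100`;
i.e. `A` is a strong near `(6/7, 1/100)`-edge-expander in the weighted graph `F`. -/
theorem stmt_10 (m : ℕ) (hm : 1 ≤ m) (F : Matrix (Fin m) (Fin m) ℝ) (hsym : F.IsSymm)
    (hnn : ∀ i j, 0 ≤ F i j) (hrow : ∀ i, ∑ j, F i j = 1) (hcol : ∀ j, ∑ i, F i j = 1)
    (A : Finset (Fin m)) (hA : A.Nonempty)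
    (hsv : ∀ x : Fin m → ℝ,
      ∑ i, (((DeltaA m A * F * DeltaA m A) *ᵥ x) i) ^ 2 ≤ (1 / 100) ^ 2 * ∑ i, (x i) ^ 2)
    (S : Finset (Fin m)) (hS : S ⊆ A) (hSne : S.Nonempty)
    (hScard : (S.card : ℝ) ≤ (6 / 7) * A.card) :
    (S.card : ℝ) / 100 ≤ ∑ u ∈ S, ∑ v ∈ Sᶜ, F u v := by
  classical
  set k : ℝ := (A.card : ℝ) with hk
  set s : ℝ := (S.card : ℝ) with hs
  have hk0 : 0 < k := by
    have := Finset.card_pos.mpr hA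
    positivity
  have hs0 : 0 ≤ s := by positivity
  set χ : Fin m → ℝ := fun i => if i ∈ A then 1 else 0 with hχ
  set x : Fin m → ℝ := fun i => if i ∈ S then 1 else 0 with hx
  set t : ℝ := s / k with ht
  set y : Fin m → ℝ := fun i => x i - t * χ i with hy
  have hxχ : ∀ i, χ i * x i = x i := by
    intro i
    by_cases h : i ∈ S
    · simp [hx, hχ, h, hS h]
    · simp [hx, h]
  have hsumx : ∑ i, x i = s := by
    simp [hx, hs]
  have hsumχx : ∑ i, χ i * x i = s := by
    rw [Finset.sum_congr rfl fun i _ => hxχ i, hsumx]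
  -- action of DeltaA on a vector
  have hDelta : ∀ (z : Fin m → ℝ) (i : Fin m),
      (DeltaA m A *ᵥ z) i = χ i * z i - k⁻¹ * (χ i * ∑ j, χ j * z j) := by
    intro z i
    simp only [DeltaA, Matrix.sub_mulVec, Matrix.smul_mulVec, Pi.sub_apply,
      Pi.smul_apply, smul_eq_mul]
    congr 1
    · simp only [Matrix.mulVec, dotProduct, Matrix.diagonal_apply, ite_mul, zero_mul,
        Finset.sum_ite_eq, Finset.mem_univ, if_true]
      by_cases h : i ∈ A <;> simp [hχ, h]
    · rw [← hk]
      congr 1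
      simp [Matrix.mulVec, dotProduct, Matrix.vecMulVec_apply, Finset.mul_sum, mul_assoc, hχ]
  have hDx : DeltaA m A *ᵥ x = y := by
    funext i
    rw [hDelta, hsumχx, hxχ i]
    simp only [hy, ht]
    field_simp
  -- "adjointness"
  have hadj : ∀ z : Fin m → ℝ, ∑ i, x i * (DeltaA m A *ᵥ z) i = ∑ i, y i * z i := by
    intro z
    set C : ℝ := ∑ j, χ j * z j with hC
    have step : ∀ i, x i * (DeltaA m A *ᵥ z) i = x i * z i - k⁻¹ * (x i * C) := by
      intro i
      rw [hDelta]
      have h := hxχ i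
      linear_combination (z i - k⁻¹ * C) * h
    rw [Finset.sum_congr rfl fun i _ => step i, Finset.sum_sub_distrib, ← Finset.mul_sum,
      ← Finset.sum_mul, hsumx]
    have : ∑ i, y i * z i = ∑ i, x i * z i - t * C := by
      simp only [hy, sub_mul, Finset.sum_sub_distrib]
      congr 1
      rw [Finset.mul_sum]
      exact Finset.sum_congr rfl fun i _ => by ring
    rw [this, ht]
    ring
  -- main quadratic form identity
  set Q : ℝ := ∑ i, x i * ((DeltaA m A * F * DeltaA m A) *ᵥ x) i with hQdef
  have hQ : Q = ∑ i, ∑ j, y i * F i j * y j := by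
    have h1 : (DeltaA m A * F * DeltaA m A) *ᵥ x = DeltaA m A *ᵥ (F *ᵥ y) := by
      rw [← hDx, Matrix.mulVec_mulVec, Matrix.mulVec_mulVec]
    rw [hQdef, h1, hadj]
    refine Finset.sum_congr rfl fun i _ => ?_
    rw [Matrix.mulVec, dotProduct, Finset.mul_sum]
    exact Finset.sum_congr rfl fun j _ => by ring
  set a : ℝ := ∑ i, ∑ j, x i * F i j * χ j with ha
  set c : ℝ := ∑ i, ∑ j, χ i * F i j * χ j with hc
  set xFx : ℝ := ∑ i, ∑ j, x i * F i j * x j with hxFx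
  have hcross : ∑ i, ∑ j, χ i * F i j * x j = a := by
    rw [Finset.sum_comm, ha]
    refine Finset.sum_congr rfl fun i _ => Finset.sum_congr rfl fun j _ => ?_
    rw [hsym.apply j i]
    ring
  have hexp : Q = xFx - 2 * t * a + t ^ 2 * c := by
    rw [hQ]
    have step : ∀ i j, y i * F i j * y j =
        x i * F i j * x j - t * (χ i * F i j * x j) - t * (x i * F i j * χ j)
          + t ^ 2 * (χ i * F i j * χ j) := by
      intro i j
      simp only [hy]
      ring
    simp_rw [step, Finset.sum_add_distrib, Finset.sum_sub_distrib, ← Finset.mul_sum]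
    rw [hcross, ← ha, ← hc, ← hxFx]
    ring
  -- bounds on a, c
  have hx01 : ∀ i, 0 ≤ x i ∧ x i ≤ 1 := by
    intro i; constructor <;> simp only [hx] <;> split <;> norm_num
  have hχ01 : ∀ i, 0 ≤ χ i ∧ χ i ≤ 1 := by
    intro i; constructor <;> simp only [hχ] <;> split <;> norm_num
  have hxleχ : ∀ i, x i ≤ χ i := by
    intro i
    by_cases h : i ∈ S
    · simp [hx, hχ, h, hS h]
    · simpa [hx, h] using (hχ01 i).1
  have ha0 : 0 ≤ a := by
    rw [ha]
    refine Finset.sum_nonneg fun i _ => Finset.sum_nonneg fun j _ => ?_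
    exact mul_nonneg (mul_nonneg (hx01 i).1 (hnn i j)) (hχ01 j).1
  have hales : a ≤ s := by
    rw [ha, ← hsumx]
    have h1 : ∀ i : Fin m, ∑ j, x i * F i j * χ j ≤ x i := by
      intro i
      calc ∑ j, x i * F i j * χ j ≤ ∑ j, x i * F i j := by
            refine Finset.sum_le_sum fun j _ => ?_
            have := mul_nonneg (hx01 i).1 (hnn i j)
            nlinarith [(hχ01 j).2]
        _ = x i * ∑ j, F i j := by rw [Finset.mul_sum]
        _ = x i := by rw [hrow i, mul_one]
    exact Finset.sum_le_sum fun i _ => h1 i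
  have halec : a ≤ c := by
    rw [ha, hc]
    refine Finset.sum_le_sum fun i _ => Finset.sum_le_sum fun j _ => ?_
    have h1 : 0 ≤ F i j * χ j := mul_nonneg (hnn i j) (hχ01 j).1
    have h2 := hxleχ i
    nlinarith
  -- bounds on t
  have ht0 : 0 ≤ t := by positivity
  have ht67 : t ≤ 6 / 7 := by
    rw [ht, div_le_iff₀ hk0]
    linarith [hScard]
  -- Cauchy–Schwarz bound on Q
  have hsumx2 : ∑ i, (x i) ^ 2 = s := by
    rw [← hsumx]
    refine Finset.sum_congr rfl fun i _ => ?_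
    simp only [hx]; split <;> norm_num
  have hQle : Q ≤ s / 100 := by
    have hcs := Finset.sum_mul_sq_le_sq_mul_sq Finset.univ x
      (fun i => ((DeltaA m A * F * DeltaA m A) *ᵥ x) i)
    have hb := hsv x
    rw [hsumx2] at hcs hb
    have hQ2 : Q ^ 2 ≤ (s / 100) ^ 2 := by
      calc Q ^ 2 ≤ s * ∑ i, (((DeltaA m A * F * DeltaA m A) *ᵥ x) i) ^ 2 := hcs
        _ ≤ s * ((1 / 100) ^ 2 * s) := by
            refine mul_le_mul_of_nonneg_left hb hs0
        _ = (s / 100) ^ 2 := by ring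
    nlinarith [hs0]
  -- the cut equals s - xFx
  have hindS : ∀ h : Fin m → ℝ, ∑ i, x i * h i = ∑ i ∈ S, h i := by
    intro h
    rw [← Finset.sum_subset (Finset.subset_univ S) (fun i _ hi => by simp [hx, hi])]
    exact Finset.sum_congr rfl fun i hi => by simp [hx, hi]
  have hxFxS : xFx = ∑ i ∈ S, ∑ j ∈ S, F i j := by
    rw [hxFx]
    have h1 : ∀ i, ∑ j, x i * F i j * x j = x i * ∑ j ∈ S, F i j := by
      intro i
      rw [← hindS (fun j => F i j), Finset.mul_sum]
      exact Finset.sum_congr rfl fun j _ => by ring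
    rw [Finset.sum_congr rfl fun i _ => h1 i, hindS]
  have hcut : ∑ u ∈ S, ∑ v ∈ Sᶜ, F u v = s - xFx := by
    rw [hxFxS]
    rw [show s = ∑ u ∈ S, (1 : ℝ) by rw [hs]; simp]
    rw [← Finset.sum_sub_distrib]
    refine Finset.sum_congr rfl fun u _ => ?_
    have := Finset.sum_add_sum_compl S (fun v => F u v)
    rw [hrow u] at this
    linarith
  -- putting it together
  rw [hcut]
  have key : xFx ≤ s / 100 + 2 * t * a - t ^ 2 * a := by
    have : xFx = Q + 2 * t * a - t ^ 2 * c := by linarith [hexp]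
    nlinarith [mul_le_mul_of_nonneg_left halec (sq_nonneg t)]
  nlinarith [mul_nonneg (sub_nonneg.mpr hales) (mul_nonneg ht0 (by linarith : (0:ℝ) ≤ 2 - t)),
    mul_nonneg hs0 (mul_nonneg (by linarith : (0:ℝ) ≤ 6/7 - t) (by linarith : (0:ℝ) ≤ 8/7 - t))]
end

section
/- Let F be a doubly stochastic m×m real matrix, let S ⊆ A ⊆ [m] with A nonempty, and set k = |A|, ℓ = |S|, μ(u) = (1/k)·Σ_{v∈A} F(u,v) for u ∈ [m], and σ = Σ_{u∈A} Σ_{v∈A} F(u,v). Then Σ_{u∈S} Σ_{v∈S} (μ(u) + μ(v) − σ/k²) ≤ ℓ·(ℓ/k)·(2 − ℓ/k). -/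
/-- For a doubly stochastic `F`, `S ⊆ A ⊆ [m]` with `A` nonempty, `k = |A|`,
`ℓ = |S|`, `μ(u) = (1/k)·Σ_{v∈A} F(u,v)` and `σ = Σ_{u∈A}Σ_{v∈A} F(u,v)`, we have
`Σ_{u∈S}Σ_{v∈S} (μ(u) + μ(v) − σ/k²) ≤ ℓ·(ℓ/k)·(2 − ℓ/k)`. -/
theorem stmt_11 (m : ℕ) (F : Matrix (Fin m) (Fin m) ℝ)
    (hnn : ∀ i j, 0 ≤ F i j) (hrow : ∀ i, ∑ j, F i j = 1) (hcol : ∀ j, ∑ i, F i j = 1)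
    (A S : Finset (Fin m)) (hSA : S ⊆ A) (hA : A.Nonempty) :
    ∑ u ∈ S, ∑ v ∈ S,
        ((A.card : ℝ)⁻¹ * (∑ w ∈ A, F u w) + (A.card : ℝ)⁻¹ * (∑ w ∈ A, F v w)
          - (∑ a ∈ A, ∑ b ∈ A, F a b) / (A.card : ℝ) ^ 2)
      ≤ (S.card : ℝ) * ((S.card : ℝ) / (A.card : ℝ)) * (2 - (S.card : ℝ) / (A.card : ℝ)) := by
  have hk : (0:ℝ) < A.card := by exact_mod_cast Finset.card_pos.mpr hA
  set k : ℝ := (A.card : ℝ) with hkdef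
  set l : ℝ := (S.card : ℝ) with hldef
  set σ : ℝ := ∑ a ∈ A, ∑ b ∈ A, F a b with hσdef
  set P : ℝ := ∑ u ∈ S, ∑ w ∈ A, F u w with hPdef
  have hPσ : P ≤ σ :=
    Finset.sum_le_sum_of_subset_of_nonneg hSA
      (fun i _ _ => Finset.sum_nonneg fun j _ => hnn i j)
  have hPl : P ≤ l := by
    have h1 : ∀ u ∈ S, ∑ w ∈ A, F u w ≤ 1 := fun u _ => by
      calc ∑ w ∈ A, F u w ≤ ∑ w, F u w :=
            Finset.sum_le_sum_of_subset_of_nonneg (Finset.subset_univ A)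
              (fun j _ _ => hnn u j)
        _ = 1 := hrow u
    calc P ≤ ∑ _u ∈ S, (1:ℝ) := Finset.sum_le_sum h1
      _ = l := by simp [hldef]
  have hσk : σ ≤ k := by
    rw [hσdef, Finset.sum_comm (f := fun a b => F a b)]
    calc ∑ b ∈ A, ∑ a ∈ A, F a b ≤ ∑ _b ∈ A, (1:ℝ) := by
          refine Finset.sum_le_sum fun b _ => ?_
          calc ∑ a ∈ A, F a b ≤ ∑ a, F a b :=
                Finset.sum_le_sum_of_subset_of_nonneg (Finset.subset_univ A)
                  (fun i _ _ => hnn i b)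
            _ = 1 := hcol b
      _ = k := by simp [hkdef]
  have hlk : l ≤ k := by rw [hkdef, hldef]; exact_mod_cast Finset.card_le_card hSA
  have hl0 : (0:ℝ) ≤ l := by positivity
  have hP0 : (0:ℝ) ≤ P :=
    Finset.sum_nonneg fun i _ => Finset.sum_nonneg fun j _ => hnn i j
  have hLHS : ∑ u ∈ S, ∑ v ∈ S,
        (k⁻¹ * (∑ w ∈ A, F u w) + k⁻¹ * (∑ w ∈ A, F v w) - σ / k ^ 2)
      = 2 * l * P / k - l ^ 2 * σ / k ^ 2 := by
    simp only [Finset.sum_add_distrib, Finset.sum_sub_distrib, Finset.sum_const,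
      nsmul_eq_mul, ← Finset.mul_sum, ← hPdef, ← hldef]
    field_simp
    ring
  have key : 2*l*P*k - l^2*σ ≤ 2*l^2*k - l^3 := by
    rcases le_total σ l with h | h
    · have a1 : 0 ≤ l*k*(σ - P) := by
        apply mul_nonneg (mul_nonneg hl0 hk.le); linarith
      have a2 : 0 ≤ l*(2*k - l)*(l - σ) := by
        apply mul_nonneg (mul_nonneg hl0 (by linarith)); linarith
      nlinarith [a1, a2]
    · have b1 : 0 ≤ l*k*(l - P) := by
        apply mul_nonneg (mul_nonneg hl0 hk.le); linarith
      have b2 : 0 ≤ l*l*(σ - l) := by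
        apply mul_nonneg (mul_nonneg hl0 hl0); linarith
      nlinarith [b1, b2]
  rw [hLHS]
  calc 2 * l * P / k - l ^ 2 * σ / k ^ 2 = (2*l*P*k - l^2*σ) / k^2 := by
        field_simp
    _ ≤ (2*l^2*k - l^3) / k^2 := by gcongr
    _ = l * (l / k) * (2 - l / k) := by field_simp
end

section
/- Let G = (V,E) be a simple graph and let G_E = (V' = V ∪ X_E, E') be its subdivision graph. Let S ⊆ V' be a cut that respects the subdivision of G. Then vol_G(S ∩ V) ≤ vol_{G_E}(S) ≤ 3·vol_G(S ∩ V). -/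
open scoped Classical

/-- The subdivision graph of `G`: vertices are the original (regular) vertices
together with one split node per edge, and each edge `{u,v}` of `G` is replaced by
the two edges `{u, x_e}` and `{v, x_e}`. -/
def Subdivision {V : Type*} (G : SimpleGraph V) : SimpleGraph (V ⊕ G.edgeSet) where
  Adj x y := ∃ (u : V) (e : G.edgeSet), u ∈ (e : Sym2 V) ∧
    ((x = Sum.inl u ∧ y = Sum.inr e) ∨ (x = Sum.inr e ∧ y = Sum.inl u))
  symm := by
    constructor
    rintro x y ⟨u, e, hu, (⟨hx, hy⟩ | ⟨hx, hy⟩)⟩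
    · exact ⟨u, e, hu, Or.inr ⟨hy, hx⟩⟩
    · exact ⟨u, e, hu, Or.inl ⟨hy, hx⟩⟩
  loopless := by
    constructor
    rintro x ⟨u, e, hu, (⟨hx, hy⟩ | ⟨hx, hy⟩)⟩ <;> subst hx <;> simp_all

/-- The volume of a finite set of vertices: the sum of their degrees. -/
noncomputable def vol {α : Type*} [Fintype α] (H : SimpleGraph α) (S : Finset α) : ℕ :=
  ∑ x ∈ S, H.degree x

/-- The number of edges of `H` with one endpoint in `S` and the other outside `S`. -/
noncomputable def crossCount {α : Type*} [Fintype α] (H : SimpleGraph α) (S : Finset α) : ℕ :=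
  (H.edgeFinset.filter (fun e => (∃ u ∈ e, u ∈ S) ∧ (∃ u ∈ e, u ∉ S))).card

/-- A set `S` of vertices of the subdivision graph respects the subdivision of `G`
if every split node both of whose neighbors are in `S` is itself in `S`, and
every split node both of whose neighbors are outside `S` is itself outside `S`. -/
def RespectsSubdivision {V : Type*} (G : SimpleGraph V)
    (S : Finset (V ⊕ G.edgeSet)) : Prop :=
  ∀ (u v : V) (h : G.Adj u v),
    ((Sum.inl u ∈ S ∧ Sum.inl v ∈ S) → Sum.inr ⟨s(u,v), G.mem_edgeSet.mpr h⟩ ∈ S) ∧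
    ((Sum.inl u ∉ S ∧ Sum.inl v ∉ S) → Sum.inr ⟨s(u,v), G.mem_edgeSet.mpr h⟩ ∉ S)

/-- The set of regular (original) vertices of `G` belonging to a set `S` of
vertices of the subdivision graph. -/
noncomputable def regularPart {V : Type*} [Fintype V] (G : SimpleGraph V)
    (S : Finset (V ⊕ G.edgeSet)) : Finset V :=
  Finset.univ.filter (fun u => Sum.inl u ∈ S)

section Aux
open Finset

variable {V : Type*} (G : SimpleGraph V)

lemma subdiv_adj_inl (u : V) (y : V ⊕ G.edgeSet) :
    (Subdivision G).Adj (Sum.inl u) y ↔ ∃ e : G.edgeSet, u ∈ (e : Sym2 V) ∧ y = Sum.inr e := by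
  constructor
  · rintro ⟨w, e, hw, (⟨hx, hy⟩ | ⟨hx, hy⟩)⟩
    · cases hx; exact ⟨e, hw, hy⟩
    · simp at hx
  · rintro ⟨e, hw, rfl⟩
    exact ⟨u, e, hw, Or.inl ⟨rfl, rfl⟩⟩

lemma subdiv_adj_inr (e : G.edgeSet) (y : V ⊕ G.edgeSet) :
    (Subdivision G).Adj (Sum.inr e) y ↔ ∃ w : V, w ∈ (e : Sym2 V) ∧ y = Sum.inl w := by
  constructor
  · rintro ⟨w, e', hw, (⟨hx, hy⟩ | ⟨hx, hy⟩)⟩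
    · simp at hx
    · obtain rfl : e = e' := by simpa using hx
      exact ⟨w, hw, hy⟩
  · rintro ⟨w, hw, rfl⟩
    exact ⟨w, e, hw, Or.inr ⟨rfl, rfl⟩⟩

variable [Fintype V]

lemma subdiv_deg_inl (u : V) : (Subdivision G).degree (Sum.inl u) = G.degree u := by
  classical
  rw [← G.card_incidenceFinset_eq_degree u,
    ← SimpleGraph.card_neighborFinset_eq_degree (G := Subdivision G) (Sum.inl u)]
  have h1 : (Subdivision G).neighborFinset (Sum.inl u) =
      (Finset.univ.filter (fun e : G.edgeSet => u ∈ (e : Sym2 V))).image Sum.inr := by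
    ext y
    simp [SimpleGraph.mem_neighborFinset, subdiv_adj_inl, eq_comm]
  have h2 : G.incidenceFinset u =
      (Finset.univ.filter (fun e : G.edgeSet => u ∈ (e : Sym2 V))).image Subtype.val := by
    ext x
    simp only [SimpleGraph.mem_incidenceFinset, SimpleGraph.incidenceSet, Set.mem_setOf_eq,
      mem_image, mem_filter, mem_univ, true_and, Subtype.exists]
    constructor
    · rintro ⟨hx, hu⟩; exact ⟨x, hx, hu, rfl⟩
    · rintro ⟨a, ha, hu, rfl⟩; exact ⟨ha, hu⟩
  rw [h1, h2, Finset.card_image_of_injective _ Sum.inr_injective,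
    Finset.card_image_of_injective _ Subtype.val_injective]

lemma subdiv_deg_inr (e : G.edgeSet) : (Subdivision G).degree (Sum.inr e) = 2 := by
  classical
  obtain ⟨x, he⟩ := e
  induction x using Sym2.ind with
  | _ u v =>
    have hadj : G.Adj u v := G.mem_edgeSet.mp he
    rw [← SimpleGraph.card_neighborFinset_eq_degree]
    have h1 : (Subdivision G).neighborFinset (Sum.inr ⟨s(u,v), he⟩) =
        {Sum.inl u, Sum.inl v} := by
      ext y
      simp only [SimpleGraph.mem_neighborFinset, subdiv_adj_inr, mem_insert, mem_singleton]
      constructor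
      · rintro ⟨w, hw, rfl⟩
        rcases Sym2.mem_iff.mp hw with rfl | rfl
        · exact Or.inl rfl
        · exact Or.inr rfl
      · rintro (rfl | rfl)
        · exact ⟨u, by simp, rfl⟩
        · exact ⟨v, by simp, rfl⟩
    rw [h1, Finset.card_insert_of_notMem (by simp [hadj.ne]), Finset.card_singleton]

end Aux

/-- If `S` is a cut in the subdivision graph `G_E` that respects the subdivision
of `G`, then `vol_G(S ∩ V) ≤ vol_{G_E}(S) ≤ 3·vol_G(S ∩ V)`. -/
theorem stmt_13 {V : Type*} [Fintype V] (G : SimpleGraph V)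
    (S : Finset (V ⊕ G.edgeSet)) (hresp : RespectsSubdivision G S) :
    vol G (regularPart G S) ≤ vol (Subdivision G) S ∧
      vol (Subdivision G) S ≤ 3 * vol G (regularPart G S) := by
  classical
  set A := regularPart G S with hA
  set B : Finset G.edgeSet := Finset.univ.filter (fun e => Sum.inr e ∈ S) with hB
  have hsplit : vol (Subdivision G) S = vol G A + 2 * B.card := by
    have h1 : S.filter (fun x => x.isLeft) = A.image Sum.inl := by
      ext x
      cases x with
      | inl u => simp [hA, regularPart]
      | inr e => simp
    have h2 : S.filter (fun x => ¬ x.isLeft) = B.image Sum.inr := by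
      ext x
      cases x with
      | inl u => simp
      | inr e => simp [hB]
    have := (Finset.sum_filter_add_sum_filter_not S (fun x => x.isLeft)
      (fun x => (Subdivision G).degree x)).symm
    rw [show vol (Subdivision G) S = ∑ x ∈ S, (Subdivision G).degree x from rfl, this, h1, h2,
      Finset.sum_image (fun a _ b _ h => Sum.inl_injective h),
      Finset.sum_image (fun a _ b _ h => Sum.inr_injective h)]
    simp only [subdiv_deg_inl, subdiv_deg_inr, Finset.sum_const, smul_eq_mul]
    rw [mul_comm]
    rfl
  have hBle : B.card ≤ vol G A := by
    have hsub : B.image Subtype.val ⊆ A.biUnion (fun u => G.incidenceFinset u) := by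
      intro x hx
      obtain ⟨e, heB, rfl⟩ := Finset.mem_image.mp hx
      have heS : Sum.inr e ∈ S := (Finset.mem_filter.mp heB).2
      obtain ⟨x, he⟩ := e
      induction x using Sym2.ind with
      | _ u v =>
        have hadj : G.Adj u v := G.mem_edgeSet.mp he
        have hor : Sum.inl u ∈ S ∨ Sum.inl v ∈ S := by
          by_contra hcon
          push_neg at hcon
          exact (hresp u v hadj).2 hcon heS
        rcases hor with h | h
        · exact Finset.mem_biUnion.mpr ⟨u, by simp [hA, regularPart, h],
            by simp [SimpleGraph.mem_incidenceFinset, SimpleGraph.incidenceSet, he]⟩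
        · exact Finset.mem_biUnion.mpr ⟨v, by simp [hA, regularPart, h],
            by simp [SimpleGraph.mem_incidenceFinset, SimpleGraph.incidenceSet, he]⟩
    calc B.card = (B.image Subtype.val).card :=
          (Finset.card_image_of_injective _ Subtype.val_injective).symm
      _ ≤ (A.biUnion (fun u => G.incidenceFinset u)).card := Finset.card_le_card hsub
      _ ≤ ∑ u ∈ A, (G.incidenceFinset u).card := Finset.card_biUnion_le
      _ = vol G A := by
          simp only [SimpleGraph.card_incidenceFinset_eq_degree]; rfl
  constructor <;> rw [hsplit] <;> omega
end
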